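/- For α ∈ (0, 1/2), the system H(x,y) = 0, α·x·∂_x H = y·∂_y H with H(x,y) = 1 − x − x²y − x³y has a solution with x = (α − √(5α² − 4α + 1))/(2α − 1) and y = (1 − x)/(x³ + x²), and this x is real and lies in (0,1). -/

import Mathlib

/-- for `α ∈ (0, 1/2)`, with
`x = (α - √(5α² - 4α + 1))/(2α - 1)` and `y = (1 - x)/(x³ + x²)`, the pair
`(x, y)` solves the system `H = 0`, `α x ∂ₓH = y ∂_yH` for
`H(x,y) = 1 - x - x²y - x³y`, and `x` is real with `x ∈ (0,1)`. -/
theorem example_system_solution (α : ℝ) (hα₀ : 0 < α) (hα₁ : α < 1/2) :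
    let x : ℝ := (α - Real.sqrt (5*α^2 - 4*α + 1)) / (2*α - 1)
    let y : ℝ := (1 - x) / (x^3 + x^2)
    (0 < x ∧ x < 1) ∧
    (1 - x - x^2*y - x^3*y = 0) ∧
    ∃ Hx Hy : ℝ,
      HasDerivAt (fun t : ℝ => 1 - t - t^2*y - t^3*y) Hx x ∧
      HasDerivAt (fun t : ℝ => 1 - x - x^2*t - x^3*t) Hy y ∧
      α * x * Hx = y * Hy := by
  intro x y
  set s : ℝ := Real.sqrt (5*α^2 - 4*α + 1) with hs_def
  have hdnn : (0:ℝ) ≤ 5*α^2 - 4*α + 1 := by nlinarith [sq_nonneg (2*α - 1), sq_nonneg α]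
  have hs2 : s^2 = 5*α^2 - 4*α + 1 := Real.sq_sqrt hdnn
  have hs0 : 0 ≤ s := Real.sqrt_nonneg _
  have h2 : 2*α - 1 < 0 := by linarith
  have h2ne : (2*α - 1) ≠ 0 := ne_of_lt h2
  have hx : x * (2*α - 1) = α - s := by
    show ((α - s) / (2*α - 1)) * (2*α - 1) = α - s
    exact div_mul_cancel₀ _ h2ne
  have hsgt : α < s := by nlinarith
  have hslt : s < 1 - α := by nlinarith
  have hx0 : 0 < x := by nlinarith
  have hx1 : x < 1 := by nlinarith
  refine ⟨⟨hx0, hx1⟩, ?_, ?_⟩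
  · have hden : x^3 + x^2 ≠ 0 := by positivity
    have hy : y * (x^3 + x^2) = 1 - x := by
      show ((1 - x) / (x^3 + x^2)) * (x^3 + x^2) = 1 - x
      field_simp
    linear_combination -hy
  · have hden : x^3 + x^2 ≠ 0 := by positivity
    have hy : y * (x^3 + x^2) = 1 - x := by
      show ((1 - x) / (x^3 + x^2)) * (x^3 + x^2) = 1 - x
      field_simp
    have hq' : (2*α-1) * ((2*α-1)*x^2 - 2*α*x + (1-2*α)) = (2*α-1) * 0 := by
      linear_combination (x*(2*α-1) + α - s - 2*α) * hx + hs2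
    have hq : (2*α-1)*x^2 - 2*α*x + (1-2*α) = 0 := mul_left_cancel₀ h2ne hq'
    refine ⟨-1 - 2*x*y - 3*x^2*y, -(x^2) - x^3, ?_, ?_, ?_⟩
    · have h := (((hasDerivAt_id x).const_sub 1).sub
        ((hasDerivAt_pow 2 x).mul_const y)).sub ((hasDerivAt_pow 3 x).mul_const y)
      refine h.congr_deriv ?_
      push_cast; ring
    · have h := (((hasDerivAt_id y).const_mul (x^2)).const_sub (1 - x)).sub
        ((hasDerivAt_id y).const_mul (x^3))
      refine h.congr_deriv ?_
      ring
    · have h1x : (1 + x) ≠ 0 := by positivity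
      apply mul_left_cancel₀ h1x
      linear_combination hq + (1 + x - 2*α - 3*α*x) * hy
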